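/- arXiv:1206.5373 — 2 statements merged into one kernel-verified Lean document; each statement's English description precedes it below -/
import Mathlib

section
/- With respect to the topology induced by the metric d(f,g) = ‖supp(f⁻¹∘g)‖, the group G = {g ∈ Sym(ℕ×ℕ) : ‖supp(g)‖ < ∞} is a topological group: composition G×G → G and inversion G → G are continuous. In particular, for every f ∈ G the conjugation map h ↦ f∘h∘f⁻¹ is continuous at the identity. -/
open scoped ENNReal

/-- The weight of a point `(i,j) ∈ ℕ × ℕ`: `2 · 3^{-(i+1)}`. -/
noncomputable def wt (p : ℕ × ℕ) : ℝ≥0∞ := 2 * ((3 : ℝ≥0∞) ^ (p.1 + 1))⁻¹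

/-- `‖S‖ = Σ_{(i,j) ∈ S} 2 · 3^{-(i+1)} ∈ [0,∞]` for `S ⊆ ℕ × ℕ`. -/
noncomputable def nrmS (S : Set (ℕ × ℕ)) : ℝ≥0∞ := ∑' p, S.indicator wt p

lemma nrmS_mono {S T : Set (ℕ × ℕ)} (h : S ⊆ T) : nrmS S ≤ nrmS T :=
  ENNReal.tsum_le_tsum fun p =>
    Set.indicator_le_indicator_of_subset h (fun _ => zero_le) p

lemma nrmS_union_le (S T : Set (ℕ × ℕ)) : nrmS (S ∪ T) ≤ nrmS S + nrmS T := by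
  rw [nrmS, nrmS, nrmS, ← ENNReal.tsum_add]
  refine ENNReal.tsum_le_tsum fun p => ?_
  by_cases hS : p ∈ S
  · refine le_trans ?_ (le_add_right le_rfl)
    rw [Set.indicator_of_mem (Set.mem_union_left _ hS), Set.indicator_of_mem hS]
  · by_cases hT : p ∈ T
    · refine le_trans ?_ (le_add_left le_rfl)
      rw [Set.indicator_of_mem (Set.mem_union_right _ hT), Set.indicator_of_mem hT]
    · rw [Set.indicator_of_notMem (fun hc => hc.elim hS hT)]
      exact zero_le

lemma nrmS_empty : nrmS ∅ = 0 := by simp [nrmS]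

/-- The support of `z : ℕ × ℕ → ZMod 2`. -/
def suppZ (z : ℕ × ℕ → ZMod 2) : Set (ℕ × ℕ) := {p | z p = 1}

/-- `‖z‖` for `z : ℕ × ℕ → ZMod 2`. -/
noncomputable def nrmZ (z : ℕ × ℕ → ZMod 2) : ℝ≥0∞ := nrmS (suppZ z)

/-- `H = {z : ℕ × ℕ → ZMod 2 | ‖z‖ < ∞}`, as an (additive) subgroup of the product group
`ℕ × ℕ → ZMod 2` with pointwise addition mod 2. -/
noncomputable def Hgrp : AddSubgroup ((ℕ × ℕ) → ZMod 2) where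
  carrier := {z | nrmZ z < ⊤}
  zero_mem' := by
    have h : suppZ 0 = ∅ := by ext p; simp [suppZ]
    simp [nrmZ, h, nrmS_empty]
  add_mem' {z w} hz hw := by
    have hsub : suppZ (z + w) ⊆ suppZ z ∪ suppZ w := by
      intro p hp
      by_contra hc
      simp only [Set.mem_union, suppZ, Set.mem_setOf_eq, not_or] at hc
      have hdi : ∀ x : ZMod 2, x = 0 ∨ x = 1 := by decide
      have hz0 : z p = 0 := (hdi (z p)).resolve_right hc.1
      have hw0 : w p = 0 := (hdi (w p)).resolve_right hc.2
      have hp' : (z + w) p = 1 := hp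
      rw [Pi.add_apply, hz0, hw0] at hp'
      exact absurd hp' (by decide)
    calc nrmZ (z + w) ≤ nrmS (suppZ z ∪ suppZ w) := nrmS_mono hsub
      _ ≤ nrmZ z + nrmZ w := nrmS_union_le _ _
      _ < ⊤ := ENNReal.add_lt_top.2 ⟨hz, hw⟩
  neg_mem' {z} hz := by
    have h : suppZ (-z) = suppZ z := by
      ext p; simp [suppZ, CharTwo.neg_eq]
    simpa [nrmZ, h] using hz
/-- `φ(x) = Σ_i 2 · x i · 3^{-(i+1)}`, the standard map from `2^ℕ` onto the ternary Cantor
set (values of `x` read as `0, 1` in `ℝ`). -/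
noncomputable def phiC (x : ℕ → ZMod 2) : ℝ :=
  ∑' i, 2 * ((x i).val : ℝ) * ((3 : ℝ) ^ (i + 1))⁻¹

/-- The metric on `H`: `d_H(z,w) = Σ_j |φ(z(·,j)) − φ(w(·,j))|`, the `ℓ¹`-distance between
the corresponding points of `C^ℕ ∩ ℓ¹`. -/
noncomputable def dH (z w : ↥Hgrp) : ℝ :=
  ∑' j, |phiC (fun i => (z : (ℕ × ℕ) → ZMod 2) (i, j)) -
          phiC (fun i => (w : (ℕ × ℕ) → ZMod 2) (i, j))|

/-- The support of a permutation `g` of `ℕ × ℕ`. -/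
def suppP (g : Equiv.Perm (ℕ × ℕ)) : Set (ℕ × ℕ) := {p | g p ≠ p}

lemma suppP_inv (g : Equiv.Perm (ℕ × ℕ)) : suppP g⁻¹ = suppP g := by
  ext p
  simp only [suppP, Set.mem_setOf_eq, ne_eq]
  constructor
  · intro h hc
    exact h (by conv_lhs => rw [← hc]; rw [Equiv.Perm.inv_def, Equiv.symm_apply_apply] ; )
  · intro h hc
    exact h (by conv_lhs => rw [← hc]; rw [Equiv.Perm.inv_def, Equiv.apply_symm_apply])

/-- `G = {g ∈ Sym(ℕ × ℕ) | ‖supp g‖ < ∞}`, as a subgroup of the symmetric group of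
`ℕ × ℕ`. -/
noncomputable def Ggrp : Subgroup (Equiv.Perm (ℕ × ℕ)) where
  carrier := {g | nrmS (suppP g) < ⊤}
  one_mem' := by
    have h : suppP 1 = ∅ := by ext p; simp [suppP]
    simp [h, nrmS_empty]
  mul_mem' {f g} hf hg := by
    have hsub : suppP (f * g) ⊆ suppP f ∪ suppP g := by
      intro p hp
      by_contra hc
      simp only [Set.mem_union, suppP, Set.mem_setOf_eq, ne_eq, not_or, not_not] at hc
      exact hp (by simp only [suppP, Set.mem_setOf_eq, Equiv.Perm.mul_apply, hc.2, hc.1] at *)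
    calc nrmS (suppP (f * g)) ≤ nrmS (suppP f ∪ suppP g) := nrmS_mono hsub
      _ ≤ nrmS (suppP f) + nrmS (suppP g) := nrmS_union_le _ _
      _ < ⊤ := ENNReal.add_lt_top.2 ⟨hf, hg⟩
  inv_mem' {g} hg := by simpa [suppP_inv] using hg

/-- The metric on `G`: `d(f,g) = ‖supp (f⁻¹ ∘ g)‖`. -/
noncomputable def dG (f g : ↥Ggrp) : ℝ :=
  (nrmS (suppP ((f : Equiv.Perm (ℕ × ℕ))⁻¹ * (g : Equiv.Perm (ℕ × ℕ))))).toReal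

/-- The action of `G` on `H`: `g • h = h ∘ g⁻¹`. -/
noncomputable def actGH (g : ↥Ggrp) (h : ↥Hgrp) : ↥Hgrp :=
  ⟨fun p => (h : (ℕ × ℕ) → ZMod 2) (((g : Equiv.Perm (ℕ × ℕ)))⁻¹ p), by
    have hsub : suppZ (fun p => (h : (ℕ × ℕ) → ZMod 2) (((g : Equiv.Perm (ℕ × ℕ)))⁻¹ p)) ⊆
        suppZ (h : (ℕ × ℕ) → ZMod 2) ∪ suppP (g : Equiv.Perm (ℕ × ℕ)) := by
      intro p hp
      by_cases hgp : ((g : Equiv.Perm (ℕ × ℕ)))⁻¹ p = p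
      · left
        have : (h : (ℕ × ℕ) → ZMod 2) (((g : Equiv.Perm (ℕ × ℕ)))⁻¹ p) = 1 := hp
        rwa [hgp] at this
      · right
        have : p ∈ suppP ((g : Equiv.Perm (ℕ × ℕ)))⁻¹ := hgp
        rwa [suppP_inv] at this
    show nrmZ _ < ⊤
    calc nrmZ _ ≤ nrmS (suppZ (h : (ℕ × ℕ) → ZMod 2) ∪ suppP (g : Equiv.Perm (ℕ × ℕ))) :=
          nrmS_mono hsub
      _ ≤ nrmZ (h : (ℕ × ℕ) → ZMod 2) + nrmS (suppP (g : Equiv.Perm (ℕ × ℕ))) :=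
          nrmS_union_le _ _
      _ < ⊤ := ENNReal.add_lt_top.2 ⟨h.2, g.2⟩⟩

/-- The topology on `G` induced by the metric `d`: the topology generated by the open balls
of `d`. -/
noncomputable def tG : TopologicalSpace ↥Ggrp :=
  TopologicalSpace.generateFrom
    {s | ∃ (f : ↥Ggrp) (ε : ℝ), 0 < ε ∧ s = {g : ↥Ggrp | dG f g < ε}}


/-! ### Auxiliary lemmas -/

lemma wt_pos (p : ℕ × ℕ) : 0 < wt p := by
  rw [wt]
  refine ENNReal.mul_pos (by norm_num) ?_
  rw [ne_eq, ENNReal.inv_eq_zero]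
  exact ENNReal.pow_ne_top (by norm_num)

lemma wt_le_nrmS {S : Set (ℕ × ℕ)} {p : ℕ × ℕ} (hp : p ∈ S) : wt p ≤ nrmS S := by
  have h := ENNReal.le_tsum (f := S.indicator wt) p
  rwa [Set.indicator_of_mem hp] at h

lemma suppP_mul_subset (f g : Equiv.Perm (ℕ × ℕ)) : suppP (f * g) ⊆ suppP f ∪ suppP g := by
  intro p hp
  by_contra hc
  simp only [Set.mem_union, suppP, Set.mem_setOf_eq, ne_eq, not_or, not_not] at hc
  exact hp (by simp only [suppP, Set.mem_setOf_eq, Equiv.Perm.mul_apply, hc.2, hc.1] at *)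

lemma mem_suppP_apply {f : Equiv.Perm (ℕ × ℕ)} {p : ℕ × ℕ} (hp : p ∈ suppP f) :
    f p ∈ suppP f := by
  simp only [suppP, Set.mem_setOf_eq, ne_eq] at *
  intro h
  exact hp (f.injective h)

lemma suppP_conj (f h : Equiv.Perm (ℕ × ℕ)) : suppP (f * h * f⁻¹) = f '' suppP h := by
  ext q
  simp only [suppP, Set.mem_setOf_eq, Set.mem_image, Equiv.Perm.mul_apply, ne_eq]
  constructor
  · intro hq
    refine ⟨f⁻¹ q, fun hc => hq (by rw [hc, Equiv.Perm.inv_def, Equiv.apply_symm_apply]), by simp⟩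
  · rintro ⟨p, hp, rfl⟩
    simp only [Equiv.Perm.inv_def, Equiv.symm_apply_apply]
    intro hc
    exact hp (f.injective hc)

/-- Key lemma: a permutation with finite-norm support maps small-norm sets to small-norm sets. -/
lemma key_img (f : Equiv.Perm (ℕ × ℕ)) (hf : nrmS (suppP f) ≠ ⊤) {ε : ℝ≥0∞}
    (hε : 0 < ε) (hεtop : ε ≠ ⊤) :
    ∃ δ : ℝ, 0 < δ ∧ ∀ S : Set (ℕ × ℕ), nrmS S < ENNReal.ofReal δ →
      nrmS ((f : Equiv.Perm (ℕ × ℕ)) '' S) < ε := by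
  have hhalf : 0 < ε / 2 := ENNReal.half_pos hε.ne'
  have hhtop : ε / 2 < ⊤ := lt_of_le_of_lt ENNReal.half_le_self (lt_top_iff_ne_top.2 hεtop)
  have htt := ENNReal.tendsto_tsum_compl_atTop_zero
    (f := (suppP f).indicator wt) (by exact hf)
  obtain ⟨T, hT⟩ := ((tendsto_order.1 htt).2 _ hhalf).exists
  have htail : nrmS (suppP f \ ↑T) < ε / 2 := by
    refine lt_of_le_of_lt ?_ hT
    rw [show (∑' b : { x // x ∉ T }, (suppP f).indicator wt ↑b)
        = ∑' p, Set.indicator {x | x ∉ T} ((suppP f).indicator wt) p from tsum_subtype _ _]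
    refine ENNReal.tsum_le_tsum fun p => ?_
    by_cases hp : p ∈ suppP f \ ↑T
    · rw [Set.indicator_of_mem hp,
        Set.indicator_of_mem (show p ∈ {x | x ∉ T} by simpa using hp.2),
        Set.indicator_of_mem hp.1]
    · rw [Set.indicator_of_notMem hp]
      exact zero_le
  set F : Finset (ℕ × ℕ) := T.image f.symm with hF
  set δ' : ℝ≥0∞ := min (ε / 2) (F.inf wt) with hδ'
  have hδ'pos : 0 < δ' := by
    refine lt_min hhalf ?_
    exact (Finset.lt_inf_iff (by simp)).2 fun p _ => wt_pos p
  have hδ'top : δ' ≠ ⊤ := (lt_of_le_of_lt (min_le_left _ _) hhtop).ne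
  refine ⟨δ'.toReal, ENNReal.toReal_pos hδ'pos.ne' hδ'top, fun S hS => ?_⟩
  rw [ENNReal.ofReal_toReal hδ'top] at hS
  have hSF : ∀ p ∈ S, p ∉ F := by
    intro p hpS hpF
    have h1 : wt p ≤ nrmS S := wt_le_nrmS hpS
    have h2 : δ' ≤ wt p := le_trans (min_le_right _ _) (Finset.inf_le hpF)
    exact absurd (lt_of_le_of_lt h1 hS) (not_lt.2 h2)
  have himg : f '' S ⊆ (S \ suppP f) ∪ (suppP f \ ↑T) := by
    rintro q ⟨p, hpS, rfl⟩
    by_cases hp : p ∈ suppP f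
    · right
      refine ⟨mem_suppP_apply hp, fun hT' => hSF p hpS ?_⟩
      exact Finset.mem_image.2 ⟨f p, hT', by simp⟩
    · left
      have hfp : f p = p := not_not.mp hp
      rw [hfp]
      exact ⟨hpS, hp⟩
  calc nrmS (f '' S) ≤ nrmS ((S \ suppP f) ∪ (suppP f \ ↑T)) := nrmS_mono himg
    _ ≤ nrmS (S \ suppP f) + nrmS (suppP f \ ↑T) := nrmS_union_le _ _
    _ < δ' + ε / 2 := ENNReal.add_lt_add (lt_of_le_of_lt (nrmS_mono Set.diff_subset) hS) htail
    _ ≤ ε / 2 + ε / 2 := add_le_add (min_le_left _ _) le_rfl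
    _ = ε := ENNReal.add_halves ε

lemma mem_G {g : Equiv.Perm (ℕ × ℕ)} (hg : g ∈ Ggrp) : nrmS (suppP g) < ⊤ := hg

lemma eG_ne_top (f g : ↥Ggrp) :
    nrmS (suppP ((f : Equiv.Perm (ℕ × ℕ))⁻¹ * (g : Equiv.Perm (ℕ × ℕ)))) ≠ ⊤ := by
  have h : ((f : Equiv.Perm (ℕ × ℕ))⁻¹ * (g : Equiv.Perm (ℕ × ℕ))) ∈ Ggrp :=
    Ggrp.mul_mem (Ggrp.inv_mem f.2) g.2
  exact (mem_G h).ne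

lemma dG_lt_iff {f g : ↥Ggrp} {ε : ℝ} :
    dG f g < ε ↔ nrmS (suppP ((f : Equiv.Perm (ℕ × ℕ))⁻¹ * g)) < ENNReal.ofReal ε :=
  (ENNReal.lt_ofReal_iff_toReal_lt (eG_ne_top f g)).symm

lemma dG_self (f : ↥Ggrp) : dG f f = 0 := by
  have h1 : (f : Equiv.Perm (ℕ × ℕ))⁻¹ * f = 1 := by group
  have h2 : suppP (1 : Equiv.Perm (ℕ × ℕ)) = ∅ := by ext p; simp [suppP]
  rw [dG, h1, h2, nrmS_empty]
  rfl

lemma dG_triangle (f g h : ↥Ggrp) : dG f h ≤ dG f g + dG g h := by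
  have heq : (f : Equiv.Perm (ℕ × ℕ))⁻¹ * h
      = ((f : Equiv.Perm (ℕ × ℕ))⁻¹ * g) * ((g : Equiv.Perm (ℕ × ℕ))⁻¹ * h) := by group
  have h1 : nrmS (suppP ((f : Equiv.Perm (ℕ × ℕ))⁻¹ * h))
      ≤ nrmS (suppP ((f : Equiv.Perm (ℕ × ℕ))⁻¹ * g))
        + nrmS (suppP ((g : Equiv.Perm (ℕ × ℕ))⁻¹ * h)) := by
    rw [heq]
    exact le_trans (nrmS_mono (suppP_mul_subset _ _)) (nrmS_union_le _ _)
  rw [dG, dG, dG, ← ENNReal.toReal_add (eG_ne_top f g) (eG_ne_top g h)]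
  exact ENNReal.toReal_mono (ENNReal.add_ne_top.2 ⟨eG_ne_top f g, eG_ne_top g h⟩) h1

lemma dG_left_inv (f g h : ↥Ggrp) : dG (f * g) (f * h) = dG g h := by
  have heq : ((f * g : ↥Ggrp) : Equiv.Perm (ℕ × ℕ))⁻¹ * ((f * h : ↥Ggrp) : Equiv.Perm (ℕ × ℕ))
      = (g : Equiv.Perm (ℕ × ℕ))⁻¹ * h := by push_cast; group
  rw [dG, heq, dG]

lemma isOpen_of_balls (s : Set ↥Ggrp)
    (hs : ∀ g ∈ s, ∃ δ : ℝ, 0 < δ ∧ {h : ↥Ggrp | dG g h < δ} ⊆ s) : @IsOpen _ tG s := by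
  letI : TopologicalSpace ↥Ggrp := tG
  have hrep : s = ⋃₀ {t | (∃ (f : ↥Ggrp) (ε : ℝ), 0 < ε ∧ t = {g : ↥Ggrp | dG f g < ε}) ∧ t ⊆ s} := by
    apply Set.Subset.antisymm
    · intro g hg
      obtain ⟨δ, hδ, hsub⟩ := hs g hg
      exact ⟨_, ⟨⟨g, δ, hδ, rfl⟩, hsub⟩, by simpa [dG_self] using hδ⟩
    · rintro g ⟨t, ⟨_, ht⟩, hgt⟩
      exact ht hgt
  rw [hrep]
  exact isOpen_sUnion fun t ht => TopologicalSpace.GenerateOpen.basic _ ht.1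

/-- With respect to the topology induced by the metric
`d(f,g) = ‖supp (f⁻¹ ∘ g)‖`, the group `G = {g ∈ Sym(ℕ × ℕ) | ‖supp g‖ < ∞}` is a
topological group: composition and inversion are continuous. In particular, for every
`f ∈ G` the conjugation map `h ↦ f * h * f⁻¹` is continuous at the identity. -/
theorem statement12 :
    (@Continuous (↥Ggrp × ↥Ggrp) ↥Ggrp (@instTopologicalSpaceProd _ _ tG tG) tG
      (fun p => p.1 * p.2)) ∧
    (@Continuous ↥Ggrp ↥Ggrp tG tG (fun g => g⁻¹)) ∧
    (∀ f : ↥Ggrp, @ContinuousAt ↥Ggrp ↥Ggrp tG tG (fun h => f * h * f⁻¹) 1) := by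
  letI : TopologicalSpace ↥Ggrp := tG
  have hmul : Continuous (fun p : ↥Ggrp × ↥Ggrp => p.1 * p.2) := by
    refine continuous_generateFrom_iff.mpr ?_
    rintro s ⟨f₀, ε, hε, rfl⟩
    rw [isOpen_prod_iff]
    intro a b hab
    simp only [Set.mem_preimage, Set.mem_setOf_eq] at hab
    set ε₁ : ℝ := ε - dG f₀ (a * b) with hε₁def
    have hε₁ : 0 < ε₁ := sub_pos.2 hab
    obtain ⟨δ, hδ, hkey⟩ := key_img ((b : Equiv.Perm (ℕ × ℕ))⁻¹)
      (by rw [suppP_inv]; exact (mem_G b.2).ne)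
      (ε := ENNReal.ofReal (ε₁ / 2)) (ENNReal.ofReal_pos.2 (half_pos hε₁)) ENNReal.ofReal_ne_top
    refine ⟨{x | dG a x < δ}, {y | dG b y < ε₁ / 2},
      TopologicalSpace.GenerateOpen.basic _ ⟨a, δ, hδ, rfl⟩,
      TopologicalSpace.GenerateOpen.basic _ ⟨b, ε₁ / 2, half_pos hε₁, rfl⟩,
      by simpa [dG_self] using hδ, by simpa [dG_self] using half_pos hε₁, ?_⟩
    rintro ⟨x, y⟩ ⟨hx, hy⟩
    simp only [Set.mem_setOf_eq] at hx hy
    simp only [Set.mem_preimage, Set.mem_setOf_eq]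
    have h1 : dG (x * b) (x * y) = dG b y := dG_left_inv x b y
    have hconj : ((a * b : ↥Ggrp) : Equiv.Perm (ℕ × ℕ))⁻¹ * ((x * b : ↥Ggrp) : Equiv.Perm (ℕ × ℕ))
        = (b : Equiv.Perm (ℕ × ℕ))⁻¹ * ((a : Equiv.Perm (ℕ × ℕ))⁻¹ * x)
          * ((b : Equiv.Perm (ℕ × ℕ))⁻¹)⁻¹ := by
      push_cast; group
    have h2 : dG (a * b) (x * b)
        = (nrmS (⇑((b : Equiv.Perm (ℕ × ℕ))⁻¹) ''
            suppP ((a : Equiv.Perm (ℕ × ℕ))⁻¹ * x))).toReal := by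
      rw [dG, hconj, suppP_conj]
    have h3 : dG (a * b) (x * b) < ε₁ / 2 := by
      rw [h2]
      exact ENNReal.toReal_lt_of_lt_ofReal (hkey _ (dG_lt_iff.1 hx))
    have t1 := dG_triangle f₀ (a * b) (x * y)
    have t2 := dG_triangle (a * b) (x * b) (x * y)
    rw [h1] at t2
    linarith
  have hinv : Continuous (fun g : ↥Ggrp => g⁻¹) := by
    refine continuous_generateFrom_iff.mpr ?_
    rintro s ⟨f₀, ε, hε, rfl⟩
    apply isOpen_of_balls
    intro g hg
    simp only [Set.mem_preimage, Set.mem_setOf_eq] at hg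
    set ε₁ : ℝ := ε - dG f₀ g⁻¹ with hε₁def
    have hε₁ : 0 < ε₁ := sub_pos.2 hg
    obtain ⟨δ, hδ, hkey⟩ := key_img (g : Equiv.Perm (ℕ × ℕ)) (mem_G g.2).ne
      (ε := ENNReal.ofReal ε₁) (ENNReal.ofReal_pos.2 hε₁) ENNReal.ofReal_ne_top
    refine ⟨δ, hδ, ?_⟩
    intro h hh
    simp only [Set.mem_setOf_eq] at hh
    simp only [Set.mem_preimage, Set.mem_setOf_eq]
    have hconj : ((g⁻¹ : ↥Ggrp) : Equiv.Perm (ℕ × ℕ))⁻¹ * ((h⁻¹ : ↥Ggrp) : Equiv.Perm (ℕ × ℕ))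
        = (g : Equiv.Perm (ℕ × ℕ)) * ((g : Equiv.Perm (ℕ × ℕ))⁻¹ * h)⁻¹
          * (g : Equiv.Perm (ℕ × ℕ))⁻¹ := by
      push_cast; group
    have h2 : dG g⁻¹ h⁻¹
        = (nrmS (⇑(g : Equiv.Perm (ℕ × ℕ)) ''
            suppP ((g : Equiv.Perm (ℕ × ℕ))⁻¹ * h))).toReal := by
      rw [dG, hconj, suppP_conj, suppP_inv]
    have h3 : dG g⁻¹ h⁻¹ < ε₁ := by
      rw [h2]
      exact ENNReal.toReal_lt_of_lt_ofReal (hkey _ (dG_lt_iff.1 hh))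
    have t1 := dG_triangle f₀ g⁻¹ h⁻¹
    linarith
  refine ⟨hmul, hinv, fun f => ?_⟩
  have c1 : Continuous (fun h : ↥Ggrp => f * h) :=
    hmul.comp (continuous_const.prodMk continuous_id)
  have c2 : Continuous (fun h : ↥Ggrp => f * h * f⁻¹) :=
    hmul.comp (c1.prodMk continuous_const)
  exact c2.continuousAt
end

section
/- Let a ∈ H be given by a(i,j) = 1 iff j = 0, and for n < ω let b_n ∈ H be given by b_n(i,j) = 1 iff j = n+1. Then for every n < ω, the orbit of a under the pointwise stabilizer G_{{b_0,…,b_{n−1}}} equals the set {x ∈ H : supp(x) is infinite, and x(i,j) = 0 for all i < ω and all j with 1 ≤ j ≤ n}; in particular, this orbit is a G_δ subset of the metric space (H, d_H). -/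
open scoped ENNReal

def colEquiv (c : ℕ) : ℕ ≃ {p : ℕ × ℕ | p.2 = c} where
  toFun := fun i => ⟨(i, c), rfl⟩
  invFun := fun p => p.1.1
  left_inv := fun _ => rfl
  right_inv := fun p => Subtype.ext (Prod.ext rfl p.2.symm)

lemma nrmS_column_lt_top (c : ℕ) : nrmS {p : ℕ × ℕ | p.2 = c} < ⊤ := by
  set e := colEquiv c with he
  have h0 : nrmS {p : ℕ × ℕ | p.2 = c} = ∑' i : ℕ, wt ((e i : ℕ × ℕ)) := by
    rw [nrmS, ← tsum_subtype]
    exact (Equiv.tsum_eq e fun p => wt (p : ℕ × ℕ)).symm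
  have h1 : nrmS {p : ℕ × ℕ | p.2 = c} = ∑' i : ℕ, wt (i, c) := h0
  rw [h1]
  have h2 : ∀ i : ℕ, wt (i, c) = ((3 : ℝ≥0∞)⁻¹) ^ i * (2 * 3⁻¹) := by
    intro i
    rw [wt, pow_succ, ENNReal.mul_inv (Or.inr (by norm_num)) (Or.inr (by norm_num)),
      ← ENNReal.inv_pow]
    ring
  simp_rw [h2]
  rw [ENNReal.tsum_mul_right, ENNReal.tsum_geometric]
  refine ENNReal.mul_lt_top ?_ ?_
  · rw [lt_top_iff_ne_top]
    refine ENNReal.inv_ne_top.2 ?_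
    rw [ne_eq, tsub_eq_zero_iff_le, not_le]
    exact ENNReal.inv_lt_one.2 (by norm_num)
  · exact ENNReal.mul_lt_top (by norm_num) (by simp [ENNReal.inv_lt_top])

/-- The topology on `H` induced by the metric `d_H`: the topology generated by the open
balls of `d_H`. -/
noncomputable def tH : TopologicalSpace ↥Hgrp :=
  TopologicalSpace.generateFrom
    {s | ∃ (z : ↥Hgrp) (ε : ℝ), 0 < ε ∧ s = {w : ↥Hgrp | dH z w < ε}}

/-- The element `a ∈ H` given by `a (i,j) = 1` iff `j = 0`. -/
noncomputable def aElt : ↥Hgrp :=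
  ⟨fun p => if p.2 = 0 then 1 else 0, by
    show nrmZ _ < ⊤
    refine lt_of_le_of_lt (nrmS_mono ?_) (nrmS_column_lt_top 0)
    intro p hp
    by_contra hc
    simp only [suppZ, Set.mem_setOf_eq] at hp
    rw [if_neg (show ¬ p.2 = 0 from hc)] at hp
    exact absurd hp (by decide)⟩

/-- The element `b_n ∈ H` given by `b_n (i,j) = 1` iff `j = n + 1`. -/
noncomputable def bElt (n : ℕ) : ↥Hgrp :=
  ⟨fun p => if p.2 = n + 1 then 1 else 0, by
    show nrmZ _ < ⊤
    refine lt_of_le_of_lt (nrmS_mono ?_) (nrmS_column_lt_top (n + 1))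
    intro p hp
    by_contra hc
    simp only [suppZ, Set.mem_setOf_eq] at hp
    rw [if_neg (show ¬ p.2 = n + 1 from hc)] at hp
    exact absurd hp (by decide)⟩

/-- The set `{b_0, …, b_{n-1}} ⊆ H`. -/
noncomputable def bSet (n : ℕ) : Set ↥Hgrp := {x | ∃ k < n, x = bElt k}

lemma actGH_one (h : ↥Hgrp) : actGH 1 h = h := by
  apply Subtype.ext
  funext p
  show (h : (ℕ × ℕ) → ZMod 2) (((1 : Equiv.Perm (ℕ × ℕ)))⁻¹ p) = _
  simp

lemma actGH_mul (g₁ g₂ : ↥Ggrp) (h : ↥Hgrp) :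
    actGH (g₁ * g₂) h = actGH g₁ (actGH g₂ h) := by
  apply Subtype.ext
  funext p
  show (h : (ℕ × ℕ) → ZMod 2) (((g₁ : Equiv.Perm (ℕ × ℕ)) * (g₂ : Equiv.Perm (ℕ × ℕ)))⁻¹ p)
      = (h : (ℕ × ℕ) → ZMod 2) ((g₂ : Equiv.Perm (ℕ × ℕ))⁻¹ ((g₁ : Equiv.Perm (ℕ × ℕ))⁻¹ p))
  rw [mul_inv_rev, Equiv.Perm.mul_apply]

/-- The pointwise stabilizer `G_C ≤ G` of a set `C ⊆ H`. -/
noncomputable def fixH (C : Set ↥Hgrp) : Subgroup ↥Ggrp where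
  carrier := {g | ∀ c ∈ C, actGH g c = c}
  one_mem' := fun c _ => actGH_one c
  mul_mem' {g₁ g₂} h₁ h₂ := fun c hc => by rw [actGH_mul, h₂ c hc, h₁ c hc]
  inv_mem' {g} hg := fun c hc => by
    conv_lhs => rw [← hg c hc]
    rw [← actGH_mul, inv_mul_cancel, actGH_one]

/-- The orbit `o(a/C)` of `a ∈ H` under the pointwise stabilizer `G_C`. -/
noncomputable def orbitOverH (C : Set ↥Hgrp) (a : ↥Hgrp) : Set ↥Hgrp :=
  {x | ∃ g ∈ fixH C, actGH g a = x}

/-- `a ⫝_A B` in `(H,G)`: the set of those `g ∈ G_A` with `g • a ∈ o(a/A ∪ B)` is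
non-meager in `G_A` (with the subspace topology from the metric topology of `G`). -/
noncomputable def NMIndepH (a : ↥Hgrp) (A B : Set ↥Hgrp) : Prop :=
  ¬ @IsMeagre ↥(fixH A) (@instTopologicalSpaceSubtype ↥Ggrp _ tG)
      {g : ↥(fixH A) | actGH (g : ↥Ggrp) a ∈ orbitOverH (A ∪ B) a}

/-! ### Auxiliary analytic lemmas -/

lemma summable_geom_wt : Summable (fun i : ℕ => (2:ℝ) * ((3:ℝ)^(i+1))⁻¹) := by
  have h := (summable_geometric_of_lt_one (by norm_num : (0:ℝ) ≤ 1/3)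
    (by norm_num : (1:ℝ)/3 < 1)).mul_left ((2:ℝ)/3)
  refine h.congr fun i => ?_
  rw [pow_succ, one_div, inv_pow, mul_inv]
  ring

lemma termR_abs_le (u v : ℕ → ZMod 2) (i : ℕ) :
    |2 * ((u i).val : ℝ) * ((3:ℝ)^(i+1))⁻¹ - 2 * ((v i).val : ℝ) * ((3:ℝ)^(i+1))⁻¹|
      ≤ 2 * ((3:ℝ)^(i+1))⁻¹ := by
  set w := ((3:ℝ)^(i+1))⁻¹ with hw
  have hw0 : (0:ℝ) ≤ w := by positivity
  have h1 : ((u i).val : ℝ) = 0 ∨ ((u i).val : ℝ) = 1 := by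
    have h := ZMod.val_lt (u i)
    have : (u i).val = 0 ∨ (u i).val = 1 := by omega
    rcases this with h|h <;> [left; right] <;> rw [h] <;> norm_num
  have h2 : ((v i).val : ℝ) = 0 ∨ ((v i).val : ℝ) = 1 := by
    have h := ZMod.val_lt (v i)
    have : (v i).val = 0 ∨ (v i).val = 1 := by omega
    rcases this with h|h <;> [left; right] <;> rw [h] <;> norm_num
  rcases h1 with h|h <;> rcases h2 with h'|h' <;> rw [h, h'] <;> rw [abs_le] <;>
    constructor <;> nlinarith

lemma summable_termR (u : ℕ → ZMod 2) :
    Summable (fun i : ℕ => 2 * ((u i).val : ℝ) * ((3:ℝ)^(i+1))⁻¹) := by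
  refine Summable.of_nonneg_of_le (fun i => by positivity) (fun i => ?_) summable_geom_wt
  have h : ((u i).val : ℝ) ≤ 1 := by
    have := ZMod.val_lt (u i)
    have h2 : (u i).val ≤ 1 := by omega
    exact_mod_cast h2
  have h0 : (0:ℝ) ≤ ((3:ℝ)^(i+1))⁻¹ := by positivity
  calc 2 * ((u i).val : ℝ) * ((3:ℝ)^(i+1))⁻¹ ≤ 2 * 1 * ((3:ℝ)^(i+1))⁻¹ := by
        apply mul_le_mul_of_nonneg_right _ h0
        nlinarith
    _ = 2 * ((3:ℝ)^(i+1))⁻¹ := by ring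

lemma tail_sum (k : ℕ) : ∑' i : ℕ, (2:ℝ) * ((3:ℝ)^(i + k + 2))⁻¹ = ((3:ℝ)^(k+1))⁻¹ := by
  have h1 : ∀ i : ℕ, (2:ℝ) * ((3:ℝ)^(i + k + 2))⁻¹ = ((1:ℝ)/3)^i * (2 * ((3:ℝ)^(k+2))⁻¹) := by
    intro i
    rw [show i + k + 2 = i + (k + 2) by ring, pow_add, mul_inv, one_div, inv_pow]
    ring
  simp_rw [h1]
  rw [tsum_mul_right, tsum_geometric_of_lt_one (by norm_num) (by norm_num)]
  rw [show k + 2 = (k + 1) + 1 by ring, pow_succ]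
  have h3 : ((3:ℝ)^(k+1)) ≠ 0 := by positivity
  field_simp
  ring
set_option maxHeartbeats 1000000 in
lemma abs_phiC_sub_ge {u v : ℕ → ZMod 2} {k : ℕ} (hk : u k ≠ v k)
    (hlt : ∀ i < k, u i = v i) : ((3:ℝ)^(k+1))⁻¹ ≤ |phiC u - phiC v| := by
  set f : ℕ → ℝ := fun i => 2 * ((u i).val : ℝ) * ((3:ℝ)^(i+1))⁻¹ -
    2 * ((v i).val : ℝ) * ((3:ℝ)^(i+1))⁻¹ with hf
  have hsum : Summable f := (summable_termR u).sub (summable_termR v)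
  have hphi : phiC u - phiC v = ∑' i, f i := by
    rw [phiC, phiC]
    exact (Summable.tsum_sub (summable_termR u) (summable_termR v)).symm
  have hzero : ∀ i < k, f i = 0 := by
    intro i hi
    simp only [hf, hlt i hi, sub_self]
  have h3 : (0:ℝ) < ((3:ℝ)^(k+1))⁻¹ := by positivity
  have hfk : |f k| = 2 * ((3:ℝ)^(k+1))⁻¹ := by
    have h1 : (u k).val = 0 ∧ (v k).val = 1 ∨ (u k).val = 1 ∧ (v k).val = 0 := by
      have hu := ZMod.val_lt (u k); have hv := ZMod.val_lt (v k)
      have hne : (u k).val ≠ (v k).val := fun h => hk (ZMod.val_injective _ h)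
      omega
    rcases h1 with ⟨h1, h2⟩ | ⟨h1, h2⟩
    · simp only [hf, h1, h2]
      push_cast
      rw [abs_of_nonpos (by nlinarith)]
      ring
    · simp only [hf, h1, h2]
      push_cast
      rw [abs_of_nonneg (by nlinarith)]
      ring
  have hsplit := Summable.sum_add_tsum_nat_add (k + 1) hsum
  have hhead : ∑ i ∈ Finset.range (k+1), f i = f k := by
    refine Finset.sum_eq_single k (fun i hi hne => ?_)
      (fun h => absurd (Finset.self_mem_range_succ k) h)
    exact hzero i (by have := Finset.mem_range.1 hi; omega)
  have hgeo : Summable (fun i : ℕ => (2:ℝ) * ((3:ℝ)^(i + k + 2))⁻¹) :=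
    (summable_nat_add_iff (k+1)).2 summable_geom_wt
  have habs_sum : Summable (fun i : ℕ => |f (i + (k + 1))|) :=
    Summable.of_nonneg_of_le (fun i => abs_nonneg _)
      (fun i => termR_abs_le u v (i + (k+1))) hgeo
  have htail_bound : |∑' i, f (i + (k + 1))| ≤ ((3:ℝ)^(k+1))⁻¹ := by
    have h1 : ‖∑' i, f (i + (k + 1))‖ ≤ ∑' i, ‖f (i + (k + 1))‖ :=
      norm_tsum_le_tsum_norm (by simpa [Real.norm_eq_abs] using habs_sum)
    simp only [Real.norm_eq_abs] at h1
    have h2 : ∑' i, |f (i + (k + 1))| ≤ ∑' i, (2:ℝ) * ((3:ℝ)^(i + k + 2))⁻¹ :=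
      Summable.tsum_le_tsum (fun i => termR_abs_le u v (i + (k+1))) habs_sum hgeo
    rw [tail_sum] at h2
    linarith
  have hkey : ∑' i, f i = f k + ∑' i, f (i + (k + 1)) := by
    rw [← hsplit, hhead]
  rw [hphi, hkey]
  have habs : |f k| - |∑' i, f (i + (k+1))| ≤ |f k + ∑' i, f (i + (k+1))| := by
    have := abs_add_le (f k + ∑' i, f (i + (k+1))) (-(∑' i, f (i + (k+1))))
    simp only [add_neg_cancel_right, abs_neg] at this
    linarith
  rw [hfk] at habs
  linarith
/-- The `ℝ≥0∞`-valued weight of `z` at `p`. -/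
noncomputable def ewt (z : (ℕ × ℕ) → ZMod 2) (p : ℕ × ℕ) : ℝ≥0∞ :=
  2 * ((z p).val : ℝ≥0∞) * ((3 : ℝ≥0∞) ^ (p.1 + 1))⁻¹

lemma ewt_ne_top (z : (ℕ × ℕ) → ZMod 2) (p : ℕ × ℕ) : ewt z p ≠ ⊤ := by
  refine ENNReal.mul_ne_top (ENNReal.mul_ne_top (by norm_num) (ENNReal.natCast_ne_top _)) ?_
  exact ENNReal.inv_ne_top.2 (by positivity)

lemma ewt_eq_indicator (z : (ℕ × ℕ) → ZMod 2) (p : ℕ × ℕ) :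
    ewt z p = (suppZ z).indicator wt p := by
  by_cases h : z p = 1
  · rw [Set.indicator_of_mem (show p ∈ suppZ z from h), ewt, wt, h]
    rw [show ZMod.val (1 : ZMod 2) = 1 from rfl]
    norm_num
  · have h0 : z p = 0 := by
      have : ∀ y : ZMod 2, y = 0 ∨ y = 1 := by decide
      exact (this (z p)).resolve_right h
    rw [Set.indicator_of_notMem (show p ∉ suppZ z from h), ewt, h0]
    norm_num

lemma tsum_ewt (z : (ℕ × ℕ) → ZMod 2) : ∑' p, ewt z p = nrmZ z := by
  rw [nrmZ, nrmS]
  exact tsum_congr (ewt_eq_indicator z)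

lemma tsum_ewt_cols (z : (ℕ × ℕ) → ZMod 2) :
    ∑' j, ∑' i, ewt z (i, j) = nrmZ z := by
  calc ∑' j, ∑' i, ewt z (i, j) = ∑' i, ∑' j, ewt z (i, j) := ENNReal.tsum_comm
    _ = ∑' p : ℕ × ℕ, ewt z p := (ENNReal.tsum_prod (f := fun i j => ewt z (i, j))).symm
    _ = nrmZ z := tsum_ewt z

/-- The column values of `z` seen through `phiC`. -/
noncomputable def colF (z : (ℕ × ℕ) → ZMod 2) (j : ℕ) : ℝ :=
  phiC (fun i => z (i, j))

lemma colF_eq_toReal {z : (ℕ × ℕ) → ZMod 2} (j : ℕ) :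
    colF z j = (∑' i, ewt z (i, j)).toReal := by
  rw [ENNReal.tsum_toReal_eq (fun i => ewt_ne_top z (i, j)), colF, phiC]
  refine tsum_congr fun i => ?_
  rw [ewt]
  rw [ENNReal.toReal_mul, ENNReal.toReal_mul, ENNReal.toReal_inv]
  norm_num

lemma colF_nonneg (z : (ℕ × ℕ) → ZMod 2) (j : ℕ) : 0 ≤ colF z j := by
  rw [colF_eq_toReal]; exact ENNReal.toReal_nonneg

lemma summable_colF (z : ↥Hgrp) : Summable (colF (z : (ℕ × ℕ) → ZMod 2)) := by
  have h : ∑' j, ∑' i, ewt (z : (ℕ × ℕ) → ZMod 2) (i, j) ≠ ⊤ := by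
    rw [tsum_ewt_cols]
    exact z.2.ne
  have := ENNReal.summable_toReal h
  exact this.congr fun j => (colF_eq_toReal j).symm

lemma summable_dH (z w : ↥Hgrp) :
    Summable (fun j => |colF (z : (ℕ × ℕ) → ZMod 2) j - colF (w : (ℕ × ℕ) → ZMod 2) j|) := by
  refine Summable.of_nonneg_of_le (fun j => abs_nonneg _) (fun j => ?_)
    ((summable_colF z).add (summable_colF w))
  refine le_trans (abs_sub _ _) ?_
  rw [abs_of_nonneg (colF_nonneg _ _), abs_of_nonneg (colF_nonneg _ _)]

lemma colF_le_dH (z w : ↥Hgrp) (j : ℕ) :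
    |colF (z : (ℕ × ℕ) → ZMod 2) j - colF (w : (ℕ × ℕ) → ZMod 2) j| ≤ dH z w :=
  Summable.le_tsum (summable_dH z w) j (fun _ _ => abs_nonneg _)

lemma dH_self (z : ↥Hgrp) : dH z z = 0 := by
  simp [dH]
lemma isOpen_of_balls_s17 {s : Set ↥Hgrp}
    (h : ∀ x ∈ s, ∃ ε : ℝ, 0 < ε ∧ ∀ y, dH x y < ε → y ∈ s) : @IsOpen _ tH s := by
  letI := tH
  have hs : s = ⋃ x ∈ s, ⋃ ε ∈ {ε : ℝ | 0 < ε ∧ ∀ y, dH x y < ε → y ∈ s},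
      {w : ↥Hgrp | dH x w < ε} := by
    ext y
    simp only [Set.mem_iUnion, Set.mem_setOf_eq]
    constructor
    · intro hy
      obtain ⟨ε, hε, hb⟩ := h y hy
      exact ⟨y, hy, ε, ⟨hε, hb⟩, by rw [dH_self]; exact hε⟩
    · rintro ⟨x, hx, ε, ⟨hε, hb⟩, hy⟩
      exact hb y hy
  rw [hs]
  refine isOpen_biUnion fun x hx => isOpen_biUnion fun ε hε => ?_
  exact TopologicalSpace.isOpen_generateFrom_of_mem ⟨x, ε, hε.1, rfl⟩

lemma cyl_open (p : ℕ × ℕ) (v : ZMod 2) :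
    @IsOpen _ tH {x : ↥Hgrp | (x : (ℕ × ℕ) → ZMod 2) p = v} := by
  refine isOpen_of_balls_s17 fun x hx => ⟨((3:ℝ)^(p.1+1))⁻¹, by positivity, fun y hy => ?_⟩
  by_contra hne
  have hne' : (y : (ℕ × ℕ) → ZMod 2) p ≠ (x : (ℕ × ℕ) → ZMod 2) p := by
    rw [hx]; exact hne
  -- least index where columns p.2 of x and y differ
  have hex : ∃ k, (x : (ℕ × ℕ) → ZMod 2) (k, p.2) ≠ (y : (ℕ × ℕ) → ZMod 2) (k, p.2) :=
    ⟨p.1, fun h => hne' h.symm⟩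
  classical
  set k₀ := Nat.find hex with hk₀
  have hk₀p : k₀ ≤ p.1 := Nat.find_le (fun h => hne' h.symm)
  have hd := abs_phiC_sub_ge (u := fun i => (x : (ℕ × ℕ) → ZMod 2) (i, p.2))
    (v := fun i => (y : (ℕ × ℕ) → ZMod 2) (i, p.2)) (Nat.find_spec hex)
    (fun i hi => by
      by_contra hne2
      exact absurd (Nat.find_le hne2) (not_le.2 hi))
  have hcol : |colF (x : (ℕ × ℕ) → ZMod 2) p.2 - colF (y : (ℕ × ℕ) → ZMod 2) p.2| ≤ dH x y :=
    colF_le_dH x y p.2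
  have hmono : ((3:ℝ)^(p.1+1))⁻¹ ≤ ((3:ℝ)^(k₀+1))⁻¹ := by
    apply inv_anti₀ (by positivity)
    exact pow_le_pow_right₀ (by norm_num) (by omega)
  rw [colF, colF] at hcol
  linarith
lemma infinite_iff_unbounded (s : Set (ℕ × ℕ)) :
    s.Infinite ↔ ∀ m : ℕ, ∃ p ∈ s, m < Denumerable.eqv (ℕ × ℕ) p := by
  constructor
  · intro hs m
    by_contra hc
    push_neg at hc
    have hsub : s ⊆ (Denumerable.eqv (ℕ × ℕ)) ⁻¹' (Set.Iic m) := fun p hp => hc p hp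
    exact hs ((Set.Finite.preimage ((Denumerable.eqv (ℕ × ℕ)).injective.injOn)
      (Set.finite_Iic m)).subset hsub)
  · intro h
    by_contra hc
    rw [Set.not_infinite] at hc
    obtain ⟨m, hm⟩ := (hc.image (Denumerable.eqv (ℕ × ℕ))).bddAbove
    obtain ⟨p, hp, hpm⟩ := h m
    exact absurd (hm (Set.mem_image_of_mem _ hp)) (not_le.2 hpm)

lemma isGδ_target (n : ℕ) :
    @IsGδ ↥Hgrp tH {x : ↥Hgrp | (suppZ (x : (ℕ × ℕ) → ZMod 2)).Infinite ∧
      ∀ i j : ℕ, 1 ≤ j → j ≤ n → (x : (ℕ × ℕ) → ZMod 2) (i, j) = 0} := by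
  letI := tH
  have h1 : {x : ↥Hgrp | (suppZ (x : (ℕ × ℕ) → ZMod 2)).Infinite} =
      ⋂ m : ℕ, ⋃ p : ℕ × ℕ, ⋃ (_ : m < Denumerable.eqv (ℕ × ℕ) p),
        {x : ↥Hgrp | (x : (ℕ × ℕ) → ZMod 2) p = 1} := by
    ext x
    simp only [Set.mem_setOf_eq, Set.mem_iInter, Set.mem_iUnion]
    rw [infinite_iff_unbounded]
    constructor
    · intro h m
      obtain ⟨p, hp, hpm⟩ := h m
      exact ⟨p, hpm, hp⟩
    · intro h m
      obtain ⟨p, hpm, hp⟩ := h m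
      exact ⟨p, hp, hpm⟩
  have h2 : {x : ↥Hgrp | ∀ i j : ℕ, 1 ≤ j → j ≤ n → (x : (ℕ × ℕ) → ZMod 2) (i, j) = 0} =
      ⋂ q : ℕ × ℕ, {x : ↥Hgrp | 1 ≤ q.2 → q.2 ≤ n → (x : (ℕ × ℕ) → ZMod 2) q = 0} := by
    ext x
    simp only [Set.mem_setOf_eq, Set.mem_iInter]
    constructor
    · intro h q
      exact h q.1 q.2
    · intro h i j
      exact h (i, j)
  have hA : IsGδ {x : ↥Hgrp | (suppZ (x : (ℕ × ℕ) → ZMod 2)).Infinite} := by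
    rw [h1]
    refine IsGδ.iInter_of_isOpen fun m => ?_
    exact isOpen_iUnion fun p => isOpen_iUnion fun _ => cyl_open p 1
  have hB : IsGδ {x : ↥Hgrp | ∀ i j : ℕ, 1 ≤ j → j ≤ n →
      (x : (ℕ × ℕ) → ZMod 2) (i, j) = 0} := by
    rw [h2]
    refine IsGδ.iInter_of_isOpen fun q => ?_
    by_cases hq : 1 ≤ q.2 ∧ q.2 ≤ n
    · have : {x : ↥Hgrp | 1 ≤ q.2 → q.2 ≤ n → (x : (ℕ × ℕ) → ZMod 2) q = 0} =
          {x : ↥Hgrp | (x : (ℕ × ℕ) → ZMod 2) q = 0} := by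
        ext x
        simp only [Set.mem_setOf_eq]
        exact ⟨fun h => h hq.1 hq.2, fun h _ _ => h⟩
      rw [this]
      exact cyl_open q 0
    · have : {x : ↥Hgrp | 1 ≤ q.2 → q.2 ≤ n → (x : (ℕ × ℕ) → ZMod 2) q = 0} = Set.univ := by
        ext x
        simp only [Set.mem_setOf_eq, Set.mem_univ, iff_true]
        intro h1 h2
        exact absurd ⟨h1, h2⟩ hq
      rw [this]
      exact isOpen_univ
  have : {x : ↥Hgrp | (suppZ (x : (ℕ × ℕ) → ZMod 2)).Infinite ∧
      ∀ i j : ℕ, 1 ≤ j → j ≤ n → (x : (ℕ × ℕ) → ZMod 2) (i, j) = 0} =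
      {x : ↥Hgrp | (suppZ (x : (ℕ × ℕ) → ZMod 2)).Infinite} ∩
      {x : ↥Hgrp | ∀ i j : ℕ, 1 ≤ j → j ≤ n → (x : (ℕ × ℕ) → ZMod 2) (i, j) = 0} := rfl
  rw [this]
  exact hA.inter hB
lemma zmod2_eq_zero_of_ne_one {y : ZMod 2} (h : y ≠ 1) : y = 0 := by
  have : ∀ y : ZMod 2, y = 0 ∨ y = 1 := by decide
  exact (this y).resolve_right h

lemma orbit_forward {n : ℕ} {x : ↥Hgrp} (hx : x ∈ orbitOverH (bSet n) aElt) :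
    (suppZ (x : (ℕ × ℕ) → ZMod 2)).Infinite ∧
      ∀ i j : ℕ, 1 ≤ j → j ≤ n → (x : (ℕ × ℕ) → ZMod 2) (i, j) = 0 := by
  obtain ⟨g, hg, rfl⟩ := hx
  set gp : Equiv.Perm (ℕ × ℕ) := (g : Equiv.Perm (ℕ × ℕ)) with hgp
  constructor
  · refine Set.infinite_of_injective_forall_mem
      (f := fun i : ℕ => gp (i, 0)) ?_ ?_
    · intro a b hab
      have h2 := gp.injective hab
      exact (Prod.ext_iff.1 h2).1
    · intro i
      show (actGH g aElt : (ℕ × ℕ) → ZMod 2) (gp (i, 0)) = 1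
      show (aElt : (ℕ × ℕ) → ZMod 2) (gp⁻¹ (gp (i, 0))) = 1
      rw [show gp⁻¹ (gp (i, 0)) = (i, 0) from gp.symm_apply_apply _]
      rfl
  · intro i j hj1 hjn
    show (aElt : (ℕ × ℕ) → ZMod 2) (gp⁻¹ (i, j)) = 0
    have hb := hg (bElt (j - 1)) ⟨j - 1, by omega, rfl⟩
    have hb' := congrFun (congrArg Subtype.val hb) (i, j)
    have hcol : (gp⁻¹ (i, j)).2 = j := by
      have hrhs : (bElt (j-1) : (ℕ × ℕ) → ZMod 2) (i, j) = 1 := by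
        show (if j = (j-1) + 1 then (1 : ZMod 2) else 0) = 1
        rw [if_pos (by omega)]
      have hlhs : (bElt (j-1) : (ℕ × ℕ) → ZMod 2) (gp⁻¹ (i, j)) = 1 := by
        rw [← hrhs]
        exact hb'
      by_contra hc
      have : (gp⁻¹ (i, j)).2 ≠ (j - 1) + 1 := by omega
      rw [show (bElt (j-1) : (ℕ × ℕ) → ZMod 2) (gp⁻¹ (i, j)) =
        (if (gp⁻¹ (i, j)).2 = (j-1)+1 then (1 : ZMod 2) else 0) from rfl, if_neg this] at hlhs
      exact absurd hlhs (by decide)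
    show (if (gp⁻¹ (i, j)).2 = 0 then (1 : ZMod 2) else 0) = 0
    rw [if_neg (by omega)]
lemma nrmS_eq_tsum_subtype (S : Set (ℕ × ℕ)) : nrmS S = ∑' p : S, wt (p : ℕ × ℕ) := by
  rw [nrmS, ← tsum_subtype]

lemma nrmS_col0_eq : nrmS {p : ℕ × ℕ | p.2 = 0} = ∑' i : ℕ, wt (i, 0) := by
  rw [nrmS_eq_tsum_subtype]
  exact (Equiv.tsum_eq (colEquiv 0) fun p => wt (p : ℕ × ℕ)).symm

lemma nrmS_range_fst_lt_top (c : ℕ → ℕ) :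
    nrmS (Set.range fun k => ((k, c k) : ℕ × ℕ)) < ⊤ := by
  have hinj : Function.Injective (fun k => ((k, c k) : ℕ × ℕ)) := by
    intro a b hab
    exact (Prod.ext_iff.1 hab).1
  rw [nrmS_eq_tsum_subtype]
  rw [← Equiv.tsum_eq (Equiv.ofInjective _ hinj) (fun p => wt (p : ℕ × ℕ))]
  have h : ∀ k : ℕ, wt ((Equiv.ofInjective _ hinj k : ℕ × ℕ)) = wt (k, 0) := fun k => rfl
  simp_rw [h]
  rw [← nrmS_col0_eq]
  exact nrmS_column_lt_top 0

lemma row_finite {S : Set (ℕ × ℕ)} (hS : nrmS S < ⊤) (k : ℕ) :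
    {c : ℕ | (k, c) ∈ S}.Finite := by
  by_contra h
  replace h : {c : ℕ | (k, c) ∈ S}.Infinite := h
  set B := {c : ℕ | (k, c) ∈ S} with hB
  have hinj : Function.Injective (fun c : ℕ => ((k, c) : ℕ × ℕ)) := by
    intro a b hab
    exact (Prod.ext_iff.1 hab).2
  have hsub : (fun c : ℕ => ((k, c) : ℕ × ℕ)) '' B ⊆ S := by
    rintro p ⟨c, hc, rfl⟩
    exact hc
  have h1 : nrmS ((fun c : ℕ => ((k, c) : ℕ × ℕ)) '' B) = ⊤ := by
    rw [nrmS_eq_tsum_subtype]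
    rw [← Equiv.tsum_eq (Equiv.Set.imageOfInjOn _ B hinj.injOn) (fun p => wt (p : ℕ × ℕ))]
    haveI : Infinite ↥B := Set.infinite_coe_iff.2 h
    have hconst : ∀ b : ↥B,
        wt ((Equiv.Set.imageOfInjOn _ B hinj.injOn b : ℕ × ℕ)) = 2 * ((3:ℝ≥0∞)^(k+1))⁻¹ :=
      fun b => rfl
    simp_rw [hconst]
    refine ENNReal.tsum_const_eq_top_of_ne_zero ?_
    have h3 : ((3:ℝ≥0∞)^(k+1))⁻¹ ≠ 0 := by
      refine ENNReal.inv_ne_zero.2 ?_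
      exact ENNReal.pow_ne_top (by norm_num)
    simp [h3]
  exact absurd (lt_of_le_of_lt (h1 ▸ nrmS_mono hsub) hS) (by simp)
lemma exists_perm {T S R R' : Set (ℕ × ℕ)}
    (eT : ℕ ≃ ↥T) (eS : ℕ ≃ ↥S) (eR : ℕ ≃ ↥R) (eR' : ℕ ≃ ↥R')
    (hTR : ∀ p, p ∈ T → p ∉ R) (hSR' : ∀ p, p ∈ S → p ∉ R')
    (hS : S ⊆ T ∪ R) (hR'sub : R' ⊆ T ∪ R) (hT : T ⊆ S ∪ R') (hRsub : R ⊆ S ∪ R') :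
    ∃ g : Equiv.Perm (ℕ × ℕ), (∀ p, g p ∈ S ↔ p ∈ T) ∧ (∀ p, p ∉ T → p ∉ R → g p = p) := by
  classical
  set F : (ℕ × ℕ) → (ℕ × ℕ) := fun p => if h : p ∈ T then (eS (eT.symm ⟨p, h⟩) : ℕ × ℕ)
    else if h : p ∈ R then (eR' (eR.symm ⟨p, h⟩) : ℕ × ℕ) else p with hF
  set G : (ℕ × ℕ) → (ℕ × ℕ) := fun p => if h : p ∈ S then (eT (eS.symm ⟨p, h⟩) : ℕ × ℕ)
    else if h : p ∈ R' then (eR (eR'.symm ⟨p, h⟩) : ℕ × ℕ) else p with hG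
  have hleft : ∀ p, G (F p) = p := by
    intro p
    by_cases h1 : p ∈ T
    · have hFp : F p = ↑(eS (eT.symm ⟨p, h1⟩)) := dif_pos h1
      have h2 : (↑(eS (eT.symm ⟨p, h1⟩)) : ℕ × ℕ) ∈ S := (eS (eT.symm ⟨p, h1⟩)).2
      rw [hFp]
      show G _ = p
      rw [hG]
      simp only [dif_pos h2, Subtype.coe_eta, Equiv.symm_apply_apply, Equiv.apply_symm_apply]
    · by_cases h2 : p ∈ R
      · have hFp : F p = ↑(eR' (eR.symm ⟨p, h2⟩)) := by
          rw [hF]; simp only [dif_neg h1, dif_pos h2]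
        have h3 : (↑(eR' (eR.symm ⟨p, h2⟩)) : ℕ × ℕ) ∈ R' := (eR' (eR.symm ⟨p, h2⟩)).2
        have h4 : (↑(eR' (eR.symm ⟨p, h2⟩)) : ℕ × ℕ) ∉ S := fun hs => hSR' _ hs h3
        rw [hFp]
        show G _ = p
        rw [hG]
        simp only [dif_neg h4, dif_pos h3, Subtype.coe_eta, Equiv.symm_apply_apply,
          Equiv.apply_symm_apply]
      · have hFp : F p = p := by rw [hF]; simp only [dif_neg h1, dif_neg h2]
        have h3 : p ∉ S := fun hs => (hS hs).elim h1 h2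
        have h4 : p ∉ R' := fun hs => (hR'sub hs).elim h1 h2
        rw [hFp, hG]
        simp only [dif_neg h3, dif_neg h4]
  have hright : ∀ p, F (G p) = p := by
    intro p
    by_cases h1 : p ∈ S
    · have hGp : G p = ↑(eT (eS.symm ⟨p, h1⟩)) := dif_pos h1
      have h2 : (↑(eT (eS.symm ⟨p, h1⟩)) : ℕ × ℕ) ∈ T := (eT (eS.symm ⟨p, h1⟩)).2
      rw [hGp]
      show F _ = p
      rw [hF]
      simp only [dif_pos h2, Subtype.coe_eta, Equiv.symm_apply_apply, Equiv.apply_symm_apply]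
    · by_cases h2 : p ∈ R'
      · have hGp : G p = ↑(eR (eR'.symm ⟨p, h2⟩)) := by
          rw [hG]; simp only [dif_neg h1, dif_pos h2]
        have h3 : (↑(eR (eR'.symm ⟨p, h2⟩)) : ℕ × ℕ) ∈ R := (eR (eR'.symm ⟨p, h2⟩)).2
        have h4 : (↑(eR (eR'.symm ⟨p, h2⟩)) : ℕ × ℕ) ∉ T := fun ht => hTR _ ht h3
        rw [hGp]
        show F _ = p
        rw [hF]
        simp only [dif_neg h4, dif_pos h3, Subtype.coe_eta, Equiv.symm_apply_apply,
          Equiv.apply_symm_apply]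
      · have hGp : G p = p := by rw [hG]; simp only [dif_neg h1, dif_neg h2]
        have h3 : p ∉ T := fun hs => (hT hs).elim h1 h2
        have h4 : p ∉ R := fun hs => (hRsub hs).elim h1 h2
        rw [hGp, hF]
        simp only [dif_neg h3, dif_neg h4]
  refine ⟨⟨F, G, hleft, hright⟩, fun p => ?_, fun p h1 h2 => ?_⟩
  · show F p ∈ S ↔ p ∈ T
    by_cases h1 : p ∈ T
    · have hFp : F p = ↑(eS (eT.symm ⟨p, h1⟩)) := dif_pos h1
      rw [hFp]
      exact ⟨fun _ => h1, fun _ => (eS (eT.symm ⟨p, h1⟩)).2⟩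
    · by_cases h2 : p ∈ R
      · have hFp : F p = ↑(eR' (eR.symm ⟨p, h2⟩)) := by
          rw [hF]; simp only [dif_neg h1, dif_pos h2]
        rw [hFp]
        exact ⟨fun hs => absurd (eR' (eR.symm ⟨p, h2⟩)).2 (hSR' _ hs), fun ht => absurd ht h1⟩
      · have hFp : F p = p := by rw [hF]; simp only [dif_neg h1, dif_neg h2]
        rw [hFp]
        exact ⟨fun hs => (hS hs).elim (fun h => absurd h h1) (fun h => absurd h h2),
          fun ht => absurd ht h1⟩
  · show F p = p
    rw [hF]; simp only [dif_neg h1, dif_neg h2]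
lemma orbit_backward {n : ℕ} {x : ↥Hgrp}
    (hinf : (suppZ (x : (ℕ × ℕ) → ZMod 2)).Infinite)
    (hvan : ∀ i j : ℕ, 1 ≤ j → j ≤ n → (x : (ℕ × ℕ) → ZMod 2) (i, j) = 0) :
    x ∈ orbitOverH (bSet n) aElt := by
  classical
  set S : Set (ℕ × ℕ) := suppZ (x : (ℕ × ℕ) → ZMod 2) with hSdef
  set T : Set (ℕ × ℕ) := {p : ℕ × ℕ | p.2 = 0} with hTdef
  have hSn : nrmS S < ⊤ := x.2
  have hrow : ∀ k : ℕ, ∃ cc : ℕ, n < cc ∧ (k, cc) ∉ S := by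
    intro k
    have hfin := row_finite hSn k
    have hIoi : (Set.Ioi n).Infinite := Set.Ioi_infinite n
    obtain ⟨cc, hcc⟩ := (hIoi.diff hfin).nonempty
    exact ⟨cc, hcc.1, hcc.2⟩
  choose c hc1 hc2 using hrow
  set Fr : Set (ℕ × ℕ) := Set.range (fun k => ((k, c k) : ℕ × ℕ)) with hFrdef
  set R : Set (ℕ × ℕ) := (S \ T) ∪ Fr with hRdef
  set R' : Set (ℕ × ℕ) := (T \ S) ∪ Fr with hR'def
  have hxvan : ∀ p ∈ S, ¬(1 ≤ p.2 ∧ p.2 ≤ n) := by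
    rintro ⟨i, j⟩ hp ⟨h1, h2⟩
    have := hvan i j h1 h2
    exact absurd ((show (x : (ℕ × ℕ) → ZMod 2) (i, j) = 1 from hp).symm.trans this) (by decide)
  have hFrprop : ∀ p ∈ Fr, n < p.2 ∧ p ∉ S := by
    rintro p ⟨k, rfl⟩
    exact ⟨hc1 k, hc2 k⟩
  have hTR : ∀ p, p ∈ T → p ∉ R := by
    intro p hpT hpR
    rcases hpR with h | h
    · exact h.2 hpT
    · have := (hFrprop p h).1
      have hp0 : p.2 = 0 := hpT
      omega
  have hSR' : ∀ p, p ∈ S → p ∉ R' := by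
    intro p hpS hpR'
    rcases hpR' with h | h
    · exact h.2 hpS
    · exact (hFrprop p h).2 hpS
  have hSsub : S ⊆ T ∪ R := by
    intro p hp
    by_cases h : p ∈ T
    · exact Or.inl h
    · exact Or.inr (Or.inl ⟨hp, h⟩)
  have hR'sub : R' ⊆ T ∪ R := by
    rintro p (h | h)
    · exact Or.inl h.1
    · exact Or.inr (Or.inr h)
  have hTsub : T ⊆ S ∪ R' := by
    intro p hp
    by_cases h : p ∈ S
    · exact Or.inl h
    · exact Or.inr (Or.inl ⟨hp, h⟩)
  have hRsub : R ⊆ S ∪ R' := by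
    rintro p (h | h)
    · exact Or.inl h.1
    · exact Or.inr (Or.inr h)
  -- infiniteness and countable equivs
  have hTinf : T.Infinite := Set.infinite_of_injective_forall_mem
    (f := fun i : ℕ => ((i, 0) : ℕ × ℕ)) (fun a b hab => (Prod.ext_iff.1 hab).1)
    (fun i => rfl)
  have hFrinf : Fr.Infinite := Set.infinite_range_of_injective
    (fun a b hab => (Prod.ext_iff.1 hab).1)
  have hRinf : R.Infinite := hFrinf.mono Set.subset_union_right
  have hR'inf : R'.Infinite := hFrinf.mono Set.subset_union_right
  haveI iT : Infinite ↥T := Set.infinite_coe_iff.2 hTinf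
  haveI iS : Infinite ↥S := Set.infinite_coe_iff.2 hinf
  haveI iR : Infinite ↥R := Set.infinite_coe_iff.2 hRinf
  haveI iR' : Infinite ↥R' := Set.infinite_coe_iff.2 hR'inf
  haveI dT : Denumerable ↥T := (nonempty_denumerable ↥T).some
  haveI dS : Denumerable ↥S := (nonempty_denumerable ↥S).some
  haveI dR : Denumerable ↥R := (nonempty_denumerable ↥R).some
  haveI dR' : Denumerable ↥R' := (nonempty_denumerable ↥R').some
  obtain ⟨g, hgS, hgfix⟩ := exists_perm (Denumerable.eqv ↥T).symm (Denumerable.eqv ↥S).symm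
    (Denumerable.eqv ↥R).symm (Denumerable.eqv ↥R').symm hTR hSR' hSsub hR'sub hTsub hRsub
  -- membership in Ggrp
  have hsupp : suppP g ⊆ T ∪ R := by
    intro p hp
    by_contra hc
    simp only [Set.mem_union, not_or] at hc
    exact hp (hgfix p hc.1 hc.2)
  have hnrm : nrmS (suppP g) < ⊤ := by
    refine lt_of_le_of_lt (nrmS_mono hsupp) ?_
    refine lt_of_le_of_lt (nrmS_union_le T R) ?_
    refine ENNReal.add_lt_top.2 ⟨nrmS_column_lt_top 0, ?_⟩
    refine lt_of_le_of_lt (nrmS_union_le (S \ T) Fr) ?_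
    refine ENNReal.add_lt_top.2 ⟨?_, nrmS_range_fst_lt_top c⟩
    exact lt_of_le_of_lt (nrmS_mono Set.diff_subset) hSn
  set gG : ↥Ggrp := ⟨g, hnrm⟩ with hgG
  -- g fixes the b's
  have hgmem : gG ∈ fixH (bSet n) := by
    rintro b ⟨k, hk, rfl⟩
    apply Subtype.ext
    funext p
    show (bElt k : (ℕ × ℕ) → ZMod 2) (g⁻¹ p) = (bElt k : (ℕ × ℕ) → ZMod 2) p
    have hfixcol : ∀ q : ℕ × ℕ, q.2 = k + 1 → g q = q := by
      intro q hq
      refine hgfix q (fun ht => by { have : q.2 = 0 := ht; omega }) ?_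
      rintro (h | h)
      · exact hxvan q h.1 ⟨by omega, by omega⟩
      · have := (hFrprop q h).1; omega
    by_cases hp : p.2 = k + 1
    · have h1 : g p = p := hfixcol p hp
      have h2 : g⁻¹ p = p := by
        apply g.injective
        rw [show g (g⁻¹ p) = p from g.apply_symm_apply p, h1]
      rw [h2]
    · show (if (g⁻¹ p).2 = k + 1 then (1 : ZMod 2) else 0) =
        (if p.2 = k + 1 then (1 : ZMod 2) else 0)
      rw [if_neg hp, if_neg ?hne]
      case hne =>
        intro hc
        have h1 : g (g⁻¹ p) = g⁻¹ p := hfixcol _ hc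
        rw [show g (g⁻¹ p) = p from g.apply_symm_apply p] at h1
        exact hp (by rw [h1]; exact hc)
  -- action on a gives x
  have hact : actGH gG aElt = x := by
    apply Subtype.ext
    funext p
    show (if (g⁻¹ p).2 = 0 then (1 : ZMod 2) else 0) = (x : (ℕ × ℕ) → ZMod 2) p
    have h2 : g⁻¹ p ∈ T ↔ p ∈ S := by
      rw [← hgS (g⁻¹ p), show g (g⁻¹ p) = p from g.apply_symm_apply p]
    by_cases hp : p ∈ S
    · rw [if_pos (show (g⁻¹ p).2 = 0 from h2.2 hp)]
      exact (show (x : (ℕ × ℕ) → ZMod 2) p = 1 from hp).symm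
    · rw [if_neg (show ¬(g⁻¹ p).2 = 0 from fun hc => hp (h2.1 hc))]
      exact (zmod2_eq_zero_of_ne_one (fun h => hp h)).symm
  exact ⟨gG, hgmem, hact⟩

/-- Let `a ∈ H` be given by `a (i,j) = 1` iff `j = 0`, and for `n < ω` let
`b_n ∈ H` be given by `b_n (i,j) = 1` iff `j = n + 1`. Then for every `n < ω`, the orbit of
`a` under the pointwise stabilizer `G_{b_0,…,b_{n-1}}` equals
`{x ∈ H | supp x is infinite and x (i,j) = 0 for all i and all 1 ≤ j ≤ n}`; in particular,
this orbit is a `G_δ` subset of the metric space `(H, d_H)`. -/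
theorem statement17 (n : ℕ) :
    orbitOverH (bSet n) aElt =
      {x : ↥Hgrp | (suppZ (x : (ℕ × ℕ) → ZMod 2)).Infinite ∧
        ∀ i j : ℕ, 1 ≤ j → j ≤ n → (x : (ℕ × ℕ) → ZMod 2) (i, j) = 0} ∧
    @IsGδ ↥Hgrp tH (orbitOverH (bSet n) aElt) := by
  have heq : orbitOverH (bSet n) aElt =
      {x : ↥Hgrp | (suppZ (x : (ℕ × ℕ) → ZMod 2)).Infinite ∧
        ∀ i j : ℕ, 1 ≤ j → j ≤ n → (x : (ℕ × ℕ) → ZMod 2) (i, j) = 0} := by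
    ext x
    exact ⟨fun h => orbit_forward h, fun h => orbit_backward h.1 h.2⟩
  exact ⟨heq, heq ▸ isGδ_target n⟩
end
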